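/- For words x₁, x₂, x₃ over Σ₁ with l ≤ rk(x₁) and l ≤ j < l + rk(x₂): (x₁ ⊙_l x₂) ⊙_j x₃ = x₁ ⊙_l (x₂ ⊙_{j − l + 1} x₃). -/

import Mathlib

/-- Words over `Σ₁ = Σ ∪ {1}`: the separator `1` is `none`; the rank of a word
is the number of occurrences of the separator. -/
def rk {α : Type*} (w : List (Option α)) : ℕ := w.countP (·.isNone)

/-- `icl u j v` is the intercalation `u ⊙_j v`: replace the `j`-th occurrence
(counting from 1) of the separator in `u` by the word `v`. -/
def icl {α : Type*} : List (Option α) → ℕ → List (Option α) → List (Option α)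
  | [], _, _ => []
  | none :: t, j, v => if j = 1 then v ++ t else none :: icl t (j - 1) v
  | some a :: t, j, v => some a :: icl t j v

lemma icl_append_left {α : Type*} (u : List (Option α)) :
    ∀ (t v : List (Option α)) (j : ℕ), 1 ≤ j → j ≤ rk u →
      icl (u ++ t) j v = icl u j v ++ t := by
  induction u with
  | nil => intro t v j h1 h2; simp [rk] at h2; omega
  | cons a u ih =>
    intro t v j h1 h2
    match a with
    | none =>
      by_cases hj : j = 1
      · simp [icl, hj]
      · simp only [List.cons_append, icl, if_neg hj]
        rw [ih t v (j-1) (by omega)]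
        simp [rk] at h2 ⊢; omega
    | some a =>
      simp only [List.cons_append, icl, List.cons_append]
      rw [ih t v j h1]
      simp [rk] at h2 ⊢; omega

/-- `(x₁ ⊙_l x₂) ⊙_j x₃ = x₁ ⊙_l (x₂ ⊙_{j − l + 1} x₃)` when
`1 ≤ l ≤ rk x₁` and `l ≤ j < l + rk x₂`. -/
theorem icl_icl_mid {α : Type*} (x₁ x₂ x₃ : List (Option α)) (j l : ℕ)
    (h1 : 1 ≤ l) (hl : l ≤ rk x₁) (hlj : l ≤ j) (hj : j < l + rk x₂) :
    icl (icl x₁ l x₂) j x₃ = icl x₁ l (icl x₂ (j - l + 1) x₃) := by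
  induction x₁ generalizing l j with
  | nil => simp [rk] at hl; omega
  | cons a t ih =>
    match a with
    | some a =>
      have hrk : rk (some a :: t) = rk t := by simp [rk]
      simp only [icl]
      rw [ih j l h1 (by omega) hlj hj]
    | none =>
      have hrk : rk (none :: t) = rk t + 1 := by simp [rk]
      by_cases hL : l = 1
      · subst hL
        simp only [icl, eq_self_iff_true, if_true]
        rw [icl_append_left x₂ t x₃ j (by omega) (by omega)]
        congr 2
        omega
      · simp only [icl, if_neg hL]
        have hj1 : ¬ j = 1 := by omega
        simp only [icl, if_neg hj1]
        rw [ih (j-1) (l-1) (by omega) (by omega) (by omega) (by omega)]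
        congr 3
        omega
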